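/- The binary entropy function h_b and binary convolution satisfy: for fixed p ∈ (0, 1/2), the function G(u) = h_b(p*u) − h_b(u) is convex and non-increasing on [0, 1/2], with G(1/2) = 0. -/

import Mathlib

/-- Binary entropy function. -/
noncomputable def binEnt (u : ℝ) : ℝ := -u * Real.log u - (1 - u) * Real.log (1 - u)

/-- Binary convolution. -/
def binConv (u v : ℝ) : ℝ := u * (1 - v) + v * (1 - u)

lemma binEnt_eq_binEntropy (u : ℝ) : binEnt u = Real.binEntropy u := by
  simp only [binEnt, Real.binEntropy, Real.log_inv]
  ring

/-- For fixed p ∈ (0,1/2), G(u) = h_b(p*u) − h_b(u) is convex and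
non-increasing on [0,1/2], with G(1/2) = 0. -/
theorem G_convex_antitone_zero (p : ℝ) (hp0 : 0 < p) (hp : p < 1 / 2) :
    ConvexOn ℝ (Set.Icc (0 : ℝ) (1 / 2)) (fun u => binEnt (binConv p u) - binEnt u) ∧
    AntitoneOn (fun u => binEnt (binConv p u) - binEnt u) (Set.Icc (0 : ℝ) (1 / 2)) ∧
    binEnt (binConv p (1 / 2)) - binEnt (1 / 2) = 0 := by
  have ha0 : (0:ℝ) < 1 - 2*p := by linarith
  have ha1 : (1:ℝ) - 2*p < 1 := by linarith
  have hfun : (fun u => binEnt (binConv p u) - binEnt u)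
      = fun u => Real.binEntropy (p + (1 - 2*p)*u) - Real.binEntropy u := by
    funext u
    rw [binEnt_eq_binEntropy, binEnt_eq_binEntropy]
    congr 2
    simp only [binConv]; ring
  -- continuity of G
  have hc : Continuous (fun u => Real.binEntropy (p + (1 - 2*p)*u) - Real.binEntropy u) := by
    exact (Real.binEntropy_continuous.comp (by continuity)).sub Real.binEntropy_continuous
  -- basic facts about c = p + (1-2p)u
  have hcu : ∀ u : ℝ, u ∈ Set.Ioo (0:ℝ) (1/2) →
      0 < p + (1 - 2*p)*u ∧ p + (1 - 2*p)*u ≤ 1/2 ∧ u ≤ p + (1 - 2*p)*u := by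
    intro u hu
    obtain ⟨h1, h2⟩ := hu
    exact ⟨by nlinarith, by nlinarith, by nlinarith⟩
  -- first derivative of G
  have hG' : ∀ u ∈ Set.Ioo (0:ℝ) (1/2),
      HasDerivAt (fun u => Real.binEntropy (p + (1 - 2*p)*u) - Real.binEntropy u)
        ((Real.log (1 - (p + (1 - 2*p)*u)) - Real.log (p + (1 - 2*p)*u)) * (1 - 2*p)
          - (Real.log (1 - u) - Real.log u)) u := by
    intro u hu
    obtain ⟨hcpos, hchalf, _⟩ := hcu u hu
    have h1 : HasDerivAt (fun u : ℝ => p + (1 - 2*p)*u) (1 - 2*p) u := by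
      simpa using ((hasDerivAt_id u).const_mul (1 - 2*p)).const_add p
    have h2 := (Real.hasDerivAt_binEntropy (p := p + (1 - 2*p)*u)
      (by linarith) (by linarith)).comp u h1
    have h3 := Real.hasDerivAt_binEntropy (p := u) (ne_of_gt hu.1) (by linarith [hu.2])
    exact h2.sub h3
  -- the derivative function g and its derivative
  set g : ℝ → ℝ := fun u => (Real.log (1 - (p + (1 - 2*p)*u)) - Real.log (p + (1 - 2*p)*u))
      * (1 - 2*p) - (Real.log (1 - u) - Real.log u) with hg_def
  have hg' : ∀ u ∈ Set.Ioo (0:ℝ) (1/2),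
      HasDerivAt g (1/(u*(1-u)) - (1 - 2*p)^2/((p + (1 - 2*p)*u)*(1 - (p + (1 - 2*p)*u)))) u := by
    intro u hu
    obtain ⟨hcpos, hchalf, _⟩ := hcu u hu
    have hu0 : (0:ℝ) < u := hu.1
    have hu1 : u < 1/2 := hu.2
    have h1u : (0:ℝ) < 1 - u := by linarith
    have h1c : (0:ℝ) < 1 - (p + (1 - 2*p)*u) := by linarith
    have h1 : HasDerivAt (fun u : ℝ => p + (1 - 2*p)*u) (1 - 2*p) u := by
      simpa using ((hasDerivAt_id u).const_mul (1 - 2*p)).const_add p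
    have hlc : HasDerivAt (fun u : ℝ => Real.log (p + (1 - 2*p)*u))
        ((p + (1 - 2*p)*u)⁻¹ * (1 - 2*p)) u :=
      by have := (Real.hasDerivAt_log (ne_of_gt hcpos)).comp u h1; exact this
    have hl1c : HasDerivAt (fun u : ℝ => Real.log (1 - (p + (1 - 2*p)*u)))
        ((1 - (p + (1 - 2*p)*u))⁻¹ * (-(1 - 2*p))) u :=
      by have := (Real.hasDerivAt_log (ne_of_gt h1c)).comp u (h1.const_sub 1); exact this
    have hlu : HasDerivAt (fun u : ℝ => Real.log u) u⁻¹ u :=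
      Real.hasDerivAt_log (ne_of_gt hu0)
    have hl1u : HasDerivAt (fun u : ℝ => Real.log (1 - u)) ((1-u)⁻¹ * (-1)) u :=
      (Real.hasDerivAt_log (ne_of_gt h1u)).comp u ((hasDerivAt_id u).const_sub 1)
    have total := ((hl1c.sub hlc).mul_const (1 - 2*p)).sub (hl1u.sub hlu)
    refine total.congr_deriv ?_
    have hc0 := hcpos.ne'
    have hc1 := h1c.ne'
    generalize p + (1 - 2*p)*u = c at hc0 hc1 ⊢
    field_simp
    ring
  -- positivity of g'
  have hg'pos : ∀ u ∈ Set.Ioo (0:ℝ) (1/2),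
      0 < 1/(u*(1-u)) - (1 - 2*p)^2/((p + (1 - 2*p)*u)*(1 - (p + (1 - 2*p)*u))) := by
    intro u hu
    obtain ⟨hcpos, hchalf, _⟩ := hcu u hu
    have hu0 : (0:ℝ) < u := hu.1
    have hu1 : u < 1/2 := hu.2
    have h1u : (0:ℝ) < 1 - u := by linarith
    have h1c : (0:ℝ) < 1 - (p + (1 - 2*p)*u) := by linarith
    have hd1 : (0:ℝ) < u*(1-u) := mul_pos hu0 h1u
    have hd2 : (0:ℝ) < (p + (1 - 2*p)*u)*(1 - (p + (1 - 2*p)*u)) := mul_pos hcpos h1c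
    rw [sub_pos, div_lt_div_iff₀ hd2 hd1]
    have hpp : (0:ℝ) < p * (1 - p) := mul_pos hp0 (by linarith)
    nlinarith [hpp]
  -- g is strictly monotone on the open interval
  have hgmono : StrictMonoOn g (Set.Ioo (0:ℝ) (1/2)) := by
    apply strictMonoOn_of_deriv_pos (convex_Ioo _ _)
    · intro x hx
      exact (hg' x hx).differentiableAt.continuousAt.continuousWithinAt
    · intro x hx
      rw [interior_Ioo] at hx
      rw [(hg' x hx).deriv]
      exact hg'pos x hx
  -- deriv G agrees with g on the open interval
  have hderivG : ∀ u ∈ Set.Ioo (0:ℝ) (1/2),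
      deriv (fun u => Real.binEntropy (p + (1 - 2*p)*u) - Real.binEntropy u) u = g u := by
    intro u hu
    exact (hG' u hu).deriv
  -- convexity
  have hconv : ConvexOn ℝ (Set.Icc (0:ℝ) (1/2))
      (fun u => Real.binEntropy (p + (1 - 2*p)*u) - Real.binEntropy u) := by
    apply StrictConvexOn.convexOn
    apply StrictMonoOn.strictConvexOn_of_deriv (convex_Icc _ _) hc.continuousOn
    rw [interior_Icc]
    intro x hx y hy hxy
    rw [hderivG x hx, hderivG y hy]
    exact hgmono hx hy hxy
  -- antitonicity
  have hanti : AntitoneOn (fun u => Real.binEntropy (p + (1 - 2*p)*u) - Real.binEntropy u)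
      (Set.Icc (0:ℝ) (1/2)) := by
    apply antitoneOn_of_deriv_nonpos (convex_Icc _ _) hc.continuousOn
    · rw [interior_Icc]
      intro x hx
      exact (hG' x hx).differentiableAt.differentiableWithinAt
    · rw [interior_Icc]
      intro x hx
      rw [hderivG x hx]
      obtain ⟨hcpos, hchalf, hucle⟩ := hcu x hx
      have hu0 : (0:ℝ) < x := hx.1
      have h1c : (0:ℝ) < 1 - (p + (1 - 2*p)*x) := by linarith
      have hL1 : 0 ≤ Real.log (1 - (p + (1 - 2*p)*x)) - Real.log (p + (1 - 2*p)*x) := by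
        have := Real.log_le_log hcpos (by linarith :
          (p + (1 - 2*p)*x) ≤ 1 - (p + (1 - 2*p)*x))
        linarith
      have hL2 : Real.log (1 - (p + (1 - 2*p)*x)) - Real.log (p + (1 - 2*p)*x)
          ≤ Real.log (1 - x) - Real.log x := by
        have e1 : Real.log (1 - (p + (1 - 2*p)*x)) ≤ Real.log (1 - x) :=
          Real.log_le_log h1c (by linarith)
        have e2 : Real.log x ≤ Real.log (p + (1 - 2*p)*x) :=
          Real.log_le_log hu0 hucle
        linarith
      simp only [hg_def]
      nlinarith [mul_nonneg hL1 (by linarith : (0:ℝ) ≤ 1 - (1 - 2*p))]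
  refine ⟨?_, ?_, ?_⟩
  · rw [hfun]; exact hconv
  · rw [hfun]; exact hanti
  · have h12 : binConv p (1/2) = 1/2 := by
      simp only [binConv]; ring
    rw [h12, sub_self]
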